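/- arXiv:2205.07010 — 2 statements merged into one kernel-verified Lean document; each statement's English description precedes it below -/
import Mathlib

section
/- Let G be a bipartite graph with a unique perfect matching M, and let u, v be vertices of G. If P is a co-augmenting path between u and v, then the graph G \ P obtained by deleting all vertices of P is a bipartite graph with the unique perfect matching M \ P (the matching edges of M not incident to vertices of P). -/
open SimpleGraph
open scoped Classical

noncomputable section

variable {V : Type*}

structure MixedGraph (V : Type*) where
  digon : V → V → Prop
  arc : V → V → Prop
  digon_symm : ∀ u v, digon u v → digon v u
  digon_irrefl : ∀ v, ¬ digon v v
  arc_irrefl : ∀ v, ¬ arc v v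
  arc_asymm : ∀ u v, arc u v → ¬ arc v u
  digon_arc : ∀ u v, digon u v → ¬ arc u v ∧ ¬ arc v u

def MixedGraph.underlying (X : MixedGraph V) : SimpleGraph V where
  Adj u v := X.digon u v ∨ X.arc u v ∨ X.arc v u
  symm := by
    constructor
    intro u v h
    rcases h with h | h | h
    · exact Or.inl (X.digon_symm u v h)
    · exact Or.inr (Or.inr h)
    · exact Or.inr (Or.inl h)
  loopless := by
    constructor
    intro v h
    rcases h with h | h | h
    · exact X.digon_irrefl v h
    · exact X.arc_irrefl v h
    · exact X.arc_irrefl v h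

/-- The α-hermitian adjacency matrix of a mixed graph. -/
def Halpha (X : MixedGraph V) (α : ℂ) : Matrix V V ℂ := fun u v =>
  if X.digon u v then 1
  else if X.arc u v then α
  else if X.arc v u then (starRingEnd ℂ) α
  else 0

/-- The value h_α of a walk: product of matrix entries along consecutive vertices. -/
def hWalk (X : MixedGraph V) (α : ℂ) {u v : V} (p : X.underlying.Walk u v) : ℂ :=
  (p.darts.map (fun d => Halpha X α d.toProd.1 d.toProd.2)).prod

/-- A co-augmenting path w.r.t. a matching edge set `M`: a path whose edges alternate
matching / non-matching, beginning and ending with matching edges. -/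
def IsCoAugmenting (G : SimpleGraph V) (M : Set (Sym2 V)) {u v : V} (p : G.Walk u v) : Prop :=
  p.IsPath ∧ Odd p.edges.length ∧
    ∀ i : Fin p.edges.length, (p.edges.get i ∈ M ↔ Even i.val)

/-- `G` is unicyclic: connected with exactly one cycle (all cycles have the same edge set). -/
def IsUnicyclic (G : SimpleGraph V) : Prop :=
  G.Connected ∧ (∃ (u : V) (c : G.Walk u u), c.IsCycle) ∧
    ∀ (u v : V) (c : G.Walk u u) (d : G.Walk v v), c.IsCycle → d.IsCycle →
      {e | e ∈ c.edges} = {e | e ∈ d.edges}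

/-- A peg: a matching edge incident to a vertex of the cycle `c` but not an edge of `c`. -/
def IsPeg (G : SimpleGraph V) (M : G.Subgraph) {u : V} (c : G.Walk u u) (e : Sym2 V) : Prop :=
  e ∈ M.edgeSet ∧ e ∉ c.edges ∧ ∃ x ∈ c.support, x ∈ e

/-- Restriction of a matching to an induced subgraph. -/
def restrictMatching (G : SimpleGraph V) (M : G.Subgraph) (s : Set V) :
    (G.induce s).Subgraph where
  verts := Set.univ
  Adj a b := M.Adj a.1 b.1
  adj_sub h := M.adj_sub h
  edge_vert _ := Set.mem_univ _
  symm := ⟨fun _ _ h => M.symm.symm _ _ h⟩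

/-- The sign `f_W` at the end of a walk: starts at 1 and flips across non-matching edges. -/
def fEnd (G : SimpleGraph V) (M : Set (Sym2 V)) : ∀ {u v : V}, G.Walk u v → ℤ
  | _, _, SimpleGraph.Walk.nil => 1
  | _, _, @SimpleGraph.Walk.cons _ _ u w _ _ p =>
      if s(u, w) ∈ M then fEnd G M p else - fEnd G M p

end

private lemma alt_support_mem {V : Type*} {G : SimpleGraph V} {M : Set (Sym2 V)} :
    ∀ {u v : V} (p : G.Walk u v), Odd p.edges.length →
    (∀ i : Fin p.edges.length, p.edges.get i ∈ M ↔ Even i.val) →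
    ∀ x ∈ p.support, ∃ e ∈ p.edges, e ∈ M ∧ x ∈ e
  | u, _, .nil, h, _ => by simp at h
  | u, _, @SimpleGraph.Walk.cons _ _ _ w _ hadj .nil, _, halt => by
    intro x hx
    have h0 : s(u, w) ∈ M := by
      have := (halt ⟨0, by simp⟩).mpr (by simp)
      simpa using this
    simp only [SimpleGraph.Walk.support_cons, SimpleGraph.Walk.support_nil, List.mem_cons,
      List.mem_singleton] at hx
    rcases hx with rfl | rfl | h
    · exact ⟨s(x, w), by simp, h0, by simp⟩
    · exact ⟨s(u, x), by simp, h0, by simp⟩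
    · simp at h
  | u, v, @SimpleGraph.Walk.cons _ _ _ w _ h₁ (@SimpleGraph.Walk.cons _ _ _ w' _ h₂ q),
      hodd, halt => by
    intro x hx
    have h0 : s(u, w) ∈ M := by
      have := (halt ⟨0, by simp⟩).mpr (by simp)
      simpa using this
    have hq : ∀ i : Fin q.edges.length, q.edges.get i ∈ M ↔ Even i.val := by
      intro i
      have hi : i.val + 2 <
          (SimpleGraph.Walk.cons h₁ (SimpleGraph.Walk.cons h₂ q)).edges.length := by
        simp only [SimpleGraph.Walk.edges_cons, List.length_cons]
        omega
      have h := halt ⟨i.val + 2, hi⟩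
      simp only [SimpleGraph.Walk.edges_cons, List.get_cons_succ] at h
      simpa [Nat.even_add] using h
    have hqodd : Odd q.edges.length := by
      simp only [SimpleGraph.Walk.edges_cons, List.length_cons] at hodd
      obtain ⟨k, hk⟩ := hodd
      exact ⟨k - 1, by omega⟩
    simp only [SimpleGraph.Walk.support_cons, List.mem_cons] at hx
    rcases hx with rfl | rfl | h
    · exact ⟨s(x, w), by simp, h0, by simp⟩
    · exact ⟨s(u, x), by simp, h0, by simp⟩
    · obtain ⟨e, he, heM, hxe⟩ := alt_support_mem q hqodd hq x h
      exact ⟨e, by simp [he], heM, hxe⟩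

/-- Deleting a co-augmenting path from a bipartite graph with a unique perfect matching
yields a bipartite graph with a unique perfect matching (the restriction of M). -/
theorem stmt2 {V : Type*} (G : SimpleGraph V) (hbip : G.Colorable 2)
    (M : G.Subgraph) (hM : M.IsPerfectMatching)
    (huniq : ∀ N : G.Subgraph, N.IsPerfectMatching → N = M)
    {u v : V} (p : G.Walk u v) (hp : IsCoAugmenting G M.edgeSet p) :
    (G.induce {x | x ∉ p.support}).Colorable 2 ∧
    (restrictMatching G M {x | x ∉ p.support}).IsPerfectMatching ∧
    ∀ N : (G.induce {x | x ∉ p.support}).Subgraph, N.IsPerfectMatching →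
      N = restrictMatching G M {x | x ∉ p.support} := by
  classical
  obtain ⟨hpath, hodd, halt⟩ := hp
  set S : Set V := {x | x ∉ p.support} with hS
  -- every vertex on the path has its (unique) M-partner on the path
  have key : ∀ x ∈ p.support, ∀ y, M.Adj x y → y ∈ p.support := by
    intro x hx y hxy
    obtain ⟨e, he, heM, hxe⟩ := alt_support_mem p hodd halt x hx
    obtain ⟨z, rfl⟩ := Sym2.mem_iff_exists.mp hxe
    have hxz : M.Adj x z := SimpleGraph.Subgraph.mem_edgeSet.mp heM
    have hz : z ∈ p.support := p.snd_mem_support_of_mem_edges he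
    have : y = z := (hM.1 (hM.2 x)).unique hxy hxz
    rwa [this]
  -- membership transfer: partner of a vertex off the path is off the path
  have key' : ∀ x ∉ p.support, ∀ y, M.Adj x y → y ∉ p.support := by
    intro x hx y hxy hy
    exact hx (key y hy x hxy.symm)
  refine ⟨?_, ?_, ?_⟩
  · -- bipartite
    obtain ⟨C⟩ := hbip
    exact ⟨SimpleGraph.Coloring.mk (fun x => C x.1) (fun {a b} hab => C.valid hab)⟩
  · -- restricted matching is perfect
    constructor
    · intro a _
      obtain ⟨w, hw, hwu⟩ := hM.1 (hM.2 a.1)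
      have hwS : w ∈ S := key' a.1 a.2 w hw
      refine ⟨⟨w, hwS⟩, hw, ?_⟩
      intro b hb
      exact Subtype.ext (hwu b.1 hb)
    · intro a
      exact Set.mem_univ a
  · -- uniqueness
    intro N hN
    -- build a perfect matching of G from N and the path part of M
    set N' : G.Subgraph :=
      { verts := Set.univ
        Adj := fun x y =>
          (∃ (hx : x ∈ S) (hy : y ∈ S), N.Adj ⟨x, hx⟩ ⟨y, hy⟩) ∨
          ((x ∈ p.support ∨ y ∈ p.support) ∧ M.Adj x y)
        adj_sub := by
          rintro x y (⟨hx, hy, h⟩ | ⟨-, h⟩)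
          · exact h.adj_sub
          · exact M.adj_sub h
        edge_vert := fun _ => Set.mem_univ _
        symm := by
          constructor
          rintro x y (⟨hx, hy, h⟩ | ⟨hs, h⟩)
          · exact Or.inl ⟨hy, hx, h.symm⟩
          · exact Or.inr ⟨hs.symm, h.symm⟩ } with hN'def
    have hN'pm : N'.IsPerfectMatching := by
      constructor
      · intro x _
        by_cases hx : x ∈ p.support
        · obtain ⟨e, he, heM, hxe⟩ := alt_support_mem p hodd halt x hx
          obtain ⟨z, rfl⟩ := Sym2.mem_iff_exists.mp hxe
          have hxz : M.Adj x z := SimpleGraph.Subgraph.mem_edgeSet.mp heM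
          refine ⟨z, Or.inr ⟨Or.inl hx, hxz⟩, ?_⟩
          rintro y (⟨hx', -, -⟩ | ⟨-, hxy⟩)
          · exact absurd hx hx'
          · exact (hM.1 (hM.2 x)).unique hxy hxz
        · obtain ⟨w, hw, hwu⟩ := hN.1 (hN.2 ⟨x, hx⟩)
          refine ⟨w.1, Or.inl ⟨hx, w.2, by simpa using hw⟩, ?_⟩
          rintro y (⟨hx', hy', h⟩ | ⟨hs, hxy⟩)
          · have := hwu ⟨y, hy'⟩ (by convert h)
            exact congrArg Subtype.val this
          · rcases hs with hs | hs
            · exact absurd hs hx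
            · exact absurd (key y hs x hxy.symm) hx
      · intro a
        exact Set.mem_univ a
    have hNM : N' = M := huniq N' hN'pm
    -- conclude N = restrictMatching
    have hverts : N.verts = Set.univ := Set.eq_univ_of_forall hN.2
    apply SimpleGraph.Subgraph.ext
    · rw [hverts]; rfl
    · ext a b
      constructor
      · intro h
        have : N'.Adj a.1 b.1 := Or.inl ⟨a.2, b.2, by simpa using h⟩
        rw [hNM] at this
        exact this
      · intro h
        have hM' : N'.Adj a.1 b.1 := by rw [hNM]; exact h
        rcases hM' with ⟨hx, hy, hadj⟩ | ⟨hs, -⟩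
        · exact hadj
        · rcases hs with hs | hs
          · exact absurd hs a.2
          · exact absurd hs b.2
end

section
/- Let X be a unicyclic bipartite graph with a unique perfect matching. If X has more than two pegs, then between any two vertices of X there is at most one co-augmenting path. -/
open SimpleGraph
open scoped Classical

section Helpers
variable {V : Type*}
open SimpleGraph Walk
open scoped Classical
variable {V : Type*} {G : SimpleGraph V} {M : G.Subgraph}

lemma matchUniq (hM : M.IsPerfectMatching) {a b c : V} (h1 : M.Adj a b) (h2 : M.Adj a c) :
    b = c := by
  obtain ⟨w, -, hu⟩ := hM.1 (hM.2 a)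
  exact (hu b h1).trans (hu c h2).symm

lemma edge_adj {e : Sym2 V} (he : e ∈ M.edgeSet) {v : V} (hv : v ∈ e) :
    ∃ w, M.Adj v w ∧ e = s(v, w) := by
  induction e with
  | _ a b =>
    rw [Subgraph.mem_edgeSet] at he
    rcases Sym2.mem_iff.mp hv with rfl | rfl
    · exact ⟨b, he, rfl⟩
    · exact ⟨a, he.symm, Sym2.eq_swap⟩

lemma eq_edge (hM : M.IsPerfectMatching) {e f : Sym2 V} {z : V}
    (he : e ∈ M.edgeSet) (hf : f ∈ M.edgeSet) (hze : z ∈ e) (hzf : z ∈ f) : e = f := by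
  obtain ⟨a, ha, rfl⟩ := edge_adj he hze
  obtain ⟨b, hb, rfl⟩ := edge_adj hf hzf
  rw [matchUniq hM ha hb]

lemma exists_edge : ∀ {u v : V} (p : G.Walk u v) {x : V},
    x ∈ p.support → p.edges ≠ [] → ∃ e ∈ p.edges, x ∈ e
  | _, _, Walk.nil, x, hx, hne => by simp at hne
  | _, _, @Walk.cons _ _ a b c h p, x, hx, hne => by
    rcases List.mem_cons.mp (by simpa using hx) with rfl | hx'
    · exact ⟨s(x, b), by rw [Walk.edges_cons]; exact List.mem_cons_self,
        Sym2.mem_mk_left _ _⟩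
    · cases p with
      | nil =>
        simp at hx'
        subst hx'
        exact ⟨s(a, x), by rw [Walk.edges_cons]; exact List.mem_cons_self,
          Sym2.mem_mk_right _ _⟩
      | cons h' p' =>
        obtain ⟨e, he, hxe⟩ := exists_edge (Walk.cons h' p') hx' (by simp)
        exact ⟨e, by rw [Walk.edges_cons]; exact List.mem_cons_of_mem _ he, hxe⟩

lemma internal_edges : ∀ {u v : V} (p : G.Walk u v) {x : V},
    x ∈ p.support → x ≠ u → x ≠ v →
    ∃ i, ∃ (h1 : i < p.edges.length) (h2 : i + 1 < p.edges.length),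
      x ∈ p.edges[i] ∧ x ∈ p.edges[i + 1]
  | _, _, Walk.nil, x, hx, hxu, hxv => by simp at hx; exact absurd hx hxu
  | _, _, @Walk.cons _ _ a b c h p, x, hx, hxu, hxv => by
    rcases List.mem_cons.mp (by simpa using hx) with rfl | hx'
    · exact absurd rfl hxu
    · by_cases hxb : x = b
      · subst hxb
        cases p with
        | nil => exact absurd rfl hxv
        | cons h' p' =>
          refine ⟨0, by simp, by simp, ?_, ?_⟩
          · simp
          · simp
      · obtain ⟨i, h1, h2, m1, m2⟩ := internal_edges p hx' hxb hxv
        exact ⟨i + 1, by simp only [Walk.edges_cons, List.length_cons]; omega,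
          by simp only [Walk.edges_cons, List.length_cons]; omega,
          by simpa only [Walk.edges_cons, List.getElem_cons_succ] using m1,
          by simpa only [Walk.edges_cons, List.getElem_cons_succ] using m2⟩

lemma meet {P : V → Prop} : ∀ {a y : V} (r : G.Walk a y), P y →
    ∃ m, P m ∧ ∃ (r1 : G.Walk a m) (r2 : G.Walk m y), r = r1.append r2 ∧
      ∀ v ∈ r1.support, v ≠ m → ¬ P v
  | a, _, Walk.nil, hy => ⟨a, hy, Walk.nil, Walk.nil, rfl, by simp⟩
  | a, y, Walk.cons h r, hy => by
    by_cases hPa : P a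
    · exact ⟨a, hPa, Walk.nil, Walk.cons h r, rfl, by simp⟩
    · obtain ⟨m, hPm, r1, r2, hsplit, hprop⟩ := meet r hy
      refine ⟨m, hPm, Walk.cons h r1, r2, by rw [Walk.cons_append, hsplit], ?_⟩
      intro v hv hvm
      rcases List.mem_cons.mp (by simpa using hv) with rfl | hv'
      · exact hPa
      · exact hprop v hv' hvm

lemma mem_support_of_mem_edge {G : SimpleGraph V} {u v : V} {p : G.Walk u v} {e : Sym2 V}
    (he : e ∈ p.edges) {z : V} (hz : z ∈ e) : z ∈ p.support := by
  induction e with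
  | _ a b =>
    rcases Sym2.mem_iff.mp hz with rfl | rfl
    · exact p.fst_mem_support_of_mem_edges he
    · exact p.snd_mem_support_of_mem_edges he

lemma hard {G : SimpleGraph V} (hunic : IsUnicyclic G)
    {M : G.Subgraph} (hM : M.IsPerfectMatching)
    {u : V} (c : G.Walk u u) (hc : c.IsCycle)
    (hpegs : ∃ e1 e2 e3 : Sym2 V, e1 ≠ e2 ∧ e1 ≠ e3 ∧ e2 ≠ e3 ∧
      IsPeg G M c e1 ∧ IsPeg G M c e2 ∧ IsPeg G M c e3)
    {x y w1 w2 : V} (h1 : G.Adj x w1) (h2 : G.Adj x w2)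
    (p2 : G.Walk w1 y) (q2 : G.Walk w2 y)
    (hp : (Walk.cons h1 p2).IsPath) (hq : (Walk.cons h2 q2).IsPath) (hw : w1 ≠ w2)
    (altp : ∀ i (hi : i < (Walk.cons h1 p2).edges.length),
      ((Walk.cons h1 p2).edges[i] ∈ M.edgeSet ↔ ¬ Even i))
    (altq : ∀ i (hi : i < (Walk.cons h2 q2).edges.length),
      ((Walk.cons h2 q2).edges[i] ∈ M.edgeSet ↔ ¬ Even i)) : False := by
  set p : G.Walk x y := Walk.cons h1 p2 with hpdef
  set q : G.Walk x y := Walk.cons h2 q2 with hqdef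
  obtain ⟨hp', hxp2⟩ := (Walk.cons_isPath_iff h1 p2).mp hp
  obtain ⟨hq', hxq2⟩ := (Walk.cons_isPath_iff h2 q2).mp hq
  obtain ⟨m, hmq, r1, r2, hsplit, hprop⟩ :=
    meet (P := fun v => v ∈ q.support) p2 (Walk.end_mem_support q)
  set A : G.Walk x m := Walk.cons h1 r1 with hAdef
  have hpA : p = A.append r2 := by rw [hAdef, Walk.cons_append, ← hsplit]
  have hA : A.IsPath := Walk.IsPath.of_append_left (hpA ▸ hp)
  have hmp2 : m ∈ p2.support := by
    rw [hsplit]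
    exact Walk.subset_support_append_left _ _ (Walk.end_mem_support r1)
  have hxm : x ≠ m := fun h => hxp2 (h ▸ hmp2)
  set B : G.Walk x m := q.takeUntil m hmq with hBdef
  have hB : B.IsPath := hq.takeUntil hmq
  have hqB : q = B.append (q.dropUntil m hmq) := (Walk.take_spec q hmq).symm
  have hcount : B.support.count m = 1 := q.count_support_takeUntil_eq_one hmq
  have pedges : p.edges = A.edges ++ r2.edges := by rw [hpA, Walk.edges_append]
  have qedges : q.edges = B.edges ++ (q.dropUntil m hmq).edges := by
    conv_lhs => rw [hqB]
    rw [Walk.edges_append]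
  have altA : ∀ i (hi : i < A.edges.length), (A.edges[i] ∈ M.edgeSet ↔ ¬ Even i) := by
    intro i hi
    have hip : i < p.edges.length := by rw [pedges, List.length_append]; omega
    have e1 : p.edges[i]'hip = A.edges[i]'hi := by
      simp only [pedges]; exact List.getElem_append_left hi
    rw [← e1]; exact altp i hip
  have altB : ∀ i (hi : i < B.edges.length), (B.edges[i] ∈ M.edgeSet ↔ ¬ Even i) := by
    intro i hi
    have hip : i < q.edges.length := by rw [qedges, List.length_append]; omega
    have e1 : q.edges[i]'hip = B.edges[i]'hi := by
      simp only [qedges]; exact List.getElem_append_left hi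
    rw [← e1]; exact altq i hip
  have key1 : ∀ v ∈ A.support, v ≠ x → v ≠ m → ∃ e ∈ A.edges, e ∈ M.edgeSet ∧ v ∈ e := by
    intro v hv hvx hvm
    obtain ⟨i, hi1, hi2, m1, m2⟩ := internal_edges A hv hvx hvm
    by_cases he : Even i
    · exact ⟨_, List.getElem_mem hi2, (altA (i+1) hi2).mpr (by simp [Nat.even_add_one, he]), m2⟩
    · exact ⟨_, List.getElem_mem hi1, (altA i hi1).mpr he, m1⟩
  have key2 : ∀ v ∈ B.support, v ≠ x → v ≠ m → ∃ e ∈ B.edges, e ∈ M.edgeSet ∧ v ∈ e := by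
    intro v hv hvx hvm
    obtain ⟨i, hi1, hi2, m1, m2⟩ := internal_edges B hv hvx hvm
    by_cases he : Even i
    · exact ⟨_, List.getElem_mem hi2, (altB (i+1) hi2).mpr (by simp [Nat.even_add_one, he]), m2⟩
    · exact ⟨_, List.getElem_mem hi1, (altB i hi1).mpr he, m1⟩
  have hBsubq : B.support ⊆ q.support := Walk.support_takeUntil_subset q hmq
  have hBedges : B.edges ⊆ q.edges := Walk.edges_takeUntil_subset q hmq
  have hedge : ∀ e ∈ A.edges, e ∉ B.edges := by
    intro e
    induction e with
    | _ a b =>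
      intro heA heB
      rw [hAdef, Walk.edges_cons] at heA
      rcases List.mem_cons.mp heA with heq | heA'
      · rw [heq] at heB
        have hmemq : s(x, w1) ∈ q.edges := hBedges heB
        rw [hqdef, Walk.edges_cons] at hmemq
        rcases List.mem_cons.mp hmemq with heq2 | hmem
        · exact hw (Sym2.congr_right.mp heq2)
        · exact hxq2 (q2.fst_mem_support_of_mem_edges hmem)
      · have hab : a ≠ b := (r1.adj_of_mem_edges heA').ne
        have ha_r1 : a ∈ r1.support := r1.fst_mem_support_of_mem_edges heA'
        have hb_r1 : b ∈ r1.support := r1.snd_mem_support_of_mem_edges heA'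
        have haq : a ∈ q.support := hBsubq (B.fst_mem_support_of_mem_edges heB)
        have hbq : b ∈ q.support := hBsubq (B.snd_mem_support_of_mem_edges heB)
        by_cases ham : a = m
        · exact hprop b hb_r1 (fun h => hab (ham.trans h.symm)) hbq
        · exact hprop a ha_r1 ham haq
  set C : G.Walk x x := A.append B.reverse with hCdef
  have hCedges : C.edges = A.edges ++ B.edges.reverse := by
    rw [hCdef, Walk.edges_append, Walk.edges_reverse]
  have hAtail : A.support.tail = r1.support := by
    rw [hAdef, Walk.support_cons, List.tail_cons]
  have hBrevsup : B.reverse.support = B.support.reverse := Walk.support_reverse B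
  have hBrs : B.reverse.support = m :: B.reverse.support.tail := Walk.support_eq_cons _
  have hmnot : m ∉ B.reverse.support.tail := by
    have hcnt : (B.reverse.support).count m = 1 := by
      rw [hBrevsup, List.count_reverse]; exact hcount
    rw [hBrs, List.count_cons_self] at hcnt
    exact List.count_eq_zero.mp (by omega)
  have hBtail_sub : B.reverse.support.tail ⊆ B.support := by
    intro v hv
    have : v ∈ B.reverse.support := by rw [hBrs]; exact List.mem_cons_of_mem _ hv
    rw [hBrevsup] at this
    exact List.mem_reverse.mp this
  have hC : C.IsCycle := by
    refine ⟨⟨⟨?_⟩, ?_⟩, ?_⟩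
    · rw [hCedges]
      exact hA.edges_nodup.append (List.nodup_reverse.mpr hB.edges_nodup)
        (fun e he he' => hedge e he (List.mem_reverse.mp he'))
    · intro h0
      have hlen : C.length = 0 := by rw [h0]; rfl
      rw [hCdef, Walk.length_append, hAdef, Walk.length_cons] at hlen; omega
    · rw [hCdef, Walk.tail_support_append, hAtail]
      refine List.Nodup.append ?_ ?_ ?_
      · have := hA.support_nodup
        rw [hAdef, Walk.support_cons] at this
        exact this.of_cons
      · exact (hB.reverse.support_nodup).tail
      · intro v hv hv'
        exact hprop v hv (fun h => hmnot (h ▸ hv')) (hBsubq (hBtail_sub hv'))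
  have hedgeseq : {e : Sym2 V | e ∈ C.edges} = {e | e ∈ c.edges} := hunic.2.2 x u C c hC hc
  have hiff : ∀ e : Sym2 V, e ∈ C.edges ↔ e ∈ c.edges := fun e => Set.ext_iff.mp hedgeseq e
  have hcne : c.edges ≠ [] := by
    intro h0
    have : c.length = 0 := by rw [← Walk.length_edges, h0]; rfl
    exact hc.ne_nil (Walk.nil_iff_eq_nil.mp (Walk.length_eq_zero_iff.mp this))
  have claim : ∀ e, IsPeg G M c e → ∃ z, (z = x ∨ z = m) ∧ z ∈ e ∧ e ∈ M.edgeSet := by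
    rintro e ⟨heM, hec, z, hzc, hze⟩
    have heC : e ∉ C.edges := fun h => hec ((hiff e).mp h)
    have hzC : z ∈ C.support := by
      obtain ⟨e', he'c, hze'⟩ := exists_edge c hzc hcne
      exact mem_support_of_mem_edge ((hiff e').mpr he'c) hze'
    by_cases hzx : z = x
    · exact ⟨z, Or.inl hzx, hze, heM⟩
    by_cases hzm : z = m
    · exact ⟨z, Or.inr hzm, hze, heM⟩
    exfalso
    rw [hCdef, Walk.mem_support_append_iff] at hzC
    rcases hzC with hzA | hzB
    · obtain ⟨f, hfA, hfM, hzf⟩ := key1 z hzA hzx hzm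
      have hfe : f = e := eq_edge hM hfM heM hzf hze
      exact heC (hfe ▸ (hCedges ▸ List.mem_append_left _ hfA))
    · have hzB' : z ∈ B.support := by
        rw [hBrevsup, List.mem_reverse] at hzB; exact hzB
      obtain ⟨f, hfB, hfM, hzf⟩ := key2 z hzB' hzx hzm
      have hfe : f = e := eq_edge hM hfM heM hzf hze
      exact heC (hfe ▸ (hCedges ▸ List.mem_append_right _ (List.mem_reverse.mpr hfB)))
  obtain ⟨e1, e2, e3, h12, h13, h23, hpg1, hpg2, hpg3⟩ := hpegs
  obtain ⟨z1, hz1, hz1e, h1M⟩ := claim e1 hpg1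
  obtain ⟨z2, hz2, hz2e, h2M⟩ := claim e2 hpg2
  obtain ⟨z3, hz3, hz3e, h3M⟩ := claim e3 hpg3
  have htwo : z1 = z2 ∨ z1 = z3 ∨ z2 = z3 := by
    rcases hz1 with rfl | rfl <;> rcases hz2 with rfl | rfl <;> rcases hz3 with rfl | rfl <;> tauto
  rcases htwo with h | h | h
  · exact h12 (eq_edge hM h1M h2M hz1e (h ▸ hz2e))
  · exact h13 (eq_edge hM h1M h3M hz1e (h ▸ hz3e))
  · exact h23 (eq_edge hM h2M h3M hz2e (h ▸ hz3e))

lemma key {G : SimpleGraph V} (hunic : IsUnicyclic G)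
    {M : G.Subgraph} (hM : M.IsPerfectMatching)
    {u : V} (c : G.Walk u u) (hc : c.IsCycle)
    (hpegs : ∃ e1 e2 e3 : Sym2 V, e1 ≠ e2 ∧ e1 ≠ e3 ∧ e2 ≠ e3 ∧
      IsPeg G M c e1 ∧ IsPeg G M c e2 ∧ IsPeg G M c e3) :
    ∀ (n : ℕ) (x y : V) (p q : G.Walk x y), p.length ≤ n → p.IsPath → q.IsPath →
      ∀ b : Bool,
      (∀ i (hi : i < p.edges.length), (p.edges[i] ∈ M.edgeSet ↔ (Even i ↔ b = true))) →
      (∀ i (hi : i < q.edges.length), (q.edges[i] ∈ M.edgeSet ↔ (Even i ↔ b = true))) →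
      p = q := by
  intro n
  induction n with
  | zero =>
    intro x y p q hlen hp hq b altp altq
    cases p with
    | nil =>
      cases q with
      | nil => rfl
      | cons h2 q2 =>
        exact absurd (Walk.end_mem_support q2)
          (((Walk.cons_isPath_iff h2 q2).mp hq).2)
    | cons h1 p2 => simp [Walk.length_cons] at hlen
  | succ n ih =>
    intro x y p q hlen hp hq b altp altq
    cases p with
    | nil =>
      cases q with
      | nil => rfl
      | cons h2 q2 =>
        exact absurd (Walk.end_mem_support q2)
          (((Walk.cons_isPath_iff h2 q2).mp hq).2)
    | @cons _ w1 _ h1 p2 =>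
      cases q with
      | nil =>
        exact absurd (Walk.end_mem_support p2)
          (((Walk.cons_isPath_iff h1 p2).mp hp).2)
      | @cons _ w2 _ h2 q2 =>
        by_cases hww : w1 = w2
        · subst hww
          have htail : p2 = q2 := by
            refine ih w1 y p2 q2 ?_ ((Walk.cons_isPath_iff h1 p2).mp hp).1
              ((Walk.cons_isPath_iff h2 q2).mp hq).1 (!b) ?_ ?_
            · have := hlen; rw [Walk.length_cons] at this; omega
            · intro i hi
              have hi' : i + 1 < (Walk.cons h1 p2).edges.length := by
                rw [Walk.edges_cons, List.length_cons]; omega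
              have := altp (i + 1) hi'
              have e1 : (Walk.cons h1 p2).edges[i + 1]'hi' = p2.edges[i]'hi := by
                simp only [Walk.edges_cons, List.getElem_cons_succ]
              rw [e1] at this
              exact this.trans (by cases b <;> simp [Nat.even_add_one])
            · intro i hi
              have hi' : i + 1 < (Walk.cons h2 q2).edges.length := by
                rw [Walk.edges_cons, List.length_cons]; omega
              have := altq (i + 1) hi'
              have e1 : (Walk.cons h2 q2).edges[i + 1]'hi' = q2.edges[i]'hi := by
                simp only [Walk.edges_cons, List.getElem_cons_succ]
              rw [e1] at this
              exact this.trans (by cases b <;> simp [Nat.even_add_one])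
          rw [htail]
        · exfalso
          have h0p : (Walk.cons h1 p2).edges[0]'(by simp) = s(x, w1) := by
            simp only [Walk.edges_cons, List.getElem_cons_zero]
          have h0q : (Walk.cons h2 q2).edges[0]'(by simp) = s(x, w2) := by
            simp only [Walk.edges_cons, List.getElem_cons_zero]
          cases b with
          | true =>
            have hm1 : s(x, w1) ∈ M.edgeSet := by
              rw [← h0p]; exact (altp 0 (by simp)).mpr (by simp)
            have hm2 : s(x, w2) ∈ M.edgeSet := by
              rw [← h0q]; exact (altq 0 (by simp)).mpr (by simp)
            exact hww (matchUniq hM (Subgraph.mem_edgeSet.mp hm1) (Subgraph.mem_edgeSet.mp hm2))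
          | false =>
            refine hard hunic hM c hc hpegs h1 h2 p2 q2 hp hq hww ?_ ?_
            · intro i hi
              rw [altp i hi]; simp
            · intro i hi
              rw [altq i hi]; simp

end Helpers

/-- In a unicyclic bipartite graph with a unique perfect matching and more than two pegs,
any two vertices are joined by at most one co-augmenting path. -/
theorem stmt13 {V : Type*} (G : SimpleGraph V) (hunic : IsUnicyclic G)
    (hbip : G.Colorable 2)
    (M : G.Subgraph) (hM : M.IsPerfectMatching)
    (huniq : ∀ N : G.Subgraph, N.IsPerfectMatching → N = M)
    {u : V} (c : G.Walk u u) (hc : c.IsCycle)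
    (hpegs : ∃ e1 e2 e3 : Sym2 V, e1 ≠ e2 ∧ e1 ≠ e3 ∧ e2 ≠ e3 ∧
      IsPeg G M c e1 ∧ IsPeg G M c e2 ∧ IsPeg G M c e3) :
    ∀ (x y : V) (p q : G.Walk x y),
      IsCoAugmenting G M.edgeSet p → IsCoAugmenting G M.edgeSet q → p = q := by
  intro x y p q hcp hcq
  refine key hunic hM c hc hpegs p.length x y p q le_rfl hcp.1 hcq.1 true ?_ ?_
  · intro i hi
    have := hcp.2.2 ⟨i, hi⟩
    simpa using this
  · intro i hi
    have := hcq.2.2 ⟨i, hi⟩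
    simpa using this
end
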